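/- Let {M_j} be a finite collection of Hermitian n×n matrices and V ⊆ ℂⁿ a nontrivial subspace. If no real linear combination of the M_j is positive definite when restricted to V, then there exists a nonzero positive semi-definite Hermitian n×n matrix N with range contained in V such that Tr(M_j N) = 0 for all j. -/

import Mathlib

open Matrix
open scoped ComplexOrder

/-- Positive definite on a subspace `V ⊆ ℂⁿ`. -/
def PosDefOn {n : ℕ} (M : Matrix (Fin n) (Fin n) ℂ)
    (V : Submodule ℂ (Fin n → ℂ)) : Prop :=
  ∀ v ∈ V, v ≠ 0 → 0 < (star v ⬝ᵥ (M *ᵥ v)).re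

section Aux

open Set Finset

/-- Convex hull of a compact set in `ℝᵐ` is compact (Carathéodory). -/
lemma aux_isCompact_convexHull {m : ℕ} {K : Set (Fin m → ℝ)}
    (hK : IsCompact K) : IsCompact (convexHull ℝ K) := by
  rcases K.eq_empty_or_nonempty with rfl | ⟨e₀, he₀⟩
  · simpa using isCompact_empty
  · set d := m + 1 with hd
    set g : (Fin d → ℝ) × (Fin d → Fin m → ℝ) → (Fin m → ℝ) :=
      fun p => ∑ i, p.1 i • p.2 i with hgdef
    have hT : IsCompact ((stdSimplex ℝ (Fin d)) ×ˢ (Set.univ.pi fun _ : Fin d => K)) :=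
      (isCompact_stdSimplex _ _).prod (isCompact_univ_pi fun _ => hK)
    have hg : Continuous g := by
      apply continuous_finset_sum
      intro i _
      exact ((continuous_apply i).comp continuous_fst).smul
        ((continuous_apply i).comp continuous_snd)
    have him : convexHull ℝ K =
        g '' ((stdSimplex ℝ (Fin d)) ×ˢ (Set.univ.pi fun _ : Fin d => K)) := by
      apply Set.Subset.antisymm
      · intro x hx
        obtain ⟨ι, hι, z, w, hzK, hai, hw0, hw1, hsum⟩ :=
          eq_pos_convex_span_of_mem_convexHull hx
        have hcard : Fintype.card ι ≤ d := by
          have h1 := hai.card_le_finrank_succ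
          have h2 : Module.finrank ℝ (vectorSpan ℝ (Set.range z)) ≤ m := by
            have := Submodule.finrank_le (vectorSpan ℝ (Set.range z))
            simpa [Module.finrank_fin_fun] using this
          omega
        obtain ⟨f⟩ : Nonempty (ι ↪ Fin d) := by
          apply Function.Embedding.nonempty_of_card_le
          simpa using hcard
        set w' : Fin d → ℝ := Function.extend f w 0 with hw'
        set z' : Fin d → Fin m → ℝ := Function.extend f z (fun _ => e₀) with hz'
        have hwf : ∀ i, w' (f i) = w i := fun i => f.injective.extend_apply _ _ _
        have hzf : ∀ i, z' (f i) = z i := fun i => f.injective.extend_apply _ _ _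
        have hw'0 : ∀ j, j ∉ Finset.univ.map f → w' j = 0 := by
          intro j hj
          apply Function.extend_apply'
          rintro ⟨i, rfl⟩
          exact hj (Finset.mem_map_of_mem _ (Finset.mem_univ i))
        have hw'nn : ∀ j, 0 ≤ w' j := by
          intro j
          by_cases hj : j ∈ Finset.univ.map f
          · obtain ⟨i, _, rfl⟩ := Finset.mem_map.mp hj
            rw [hwf]; exact (hw0 i).le
          · rw [hw'0 j hj]
        have hw'sum : ∑ j, w' j = 1 := by
          rw [← Finset.sum_subset (Finset.subset_univ (Finset.univ.map f))
            (fun j _ hj => hw'0 j hj), Finset.sum_map]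
          rw [← hw1]
          exact Finset.sum_congr rfl fun i _ => hwf i
        have hz'K : ∀ j, z' j ∈ K := by
          intro j
          by_cases hj : j ∈ Finset.univ.map f
          · obtain ⟨i, _, rfl⟩ := Finset.mem_map.mp hj
            rw [hzf]; exact hzK (Set.mem_range_self i)
          · rw [hz', Function.extend_apply' _ _ _ (fun h => by
              obtain ⟨i, hi⟩ := h
              exact hj (hi ▸ Finset.mem_map_of_mem _ (Finset.mem_univ i)))]
            exact he₀
        have hgsum : ∑ j, w' j • z' j = x := by
          rw [← Finset.sum_subset (Finset.subset_univ (Finset.univ.map f))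
            (fun j _ hj => by rw [hw'0 j hj, zero_smul]), Finset.sum_map]
          rw [← hsum]
          exact Finset.sum_congr rfl fun i _ => by rw [hwf, hzf]
        exact ⟨(w', z'), ⟨⟨hw'nn, hw'sum⟩, fun j _ => hz'K j⟩, hgsum⟩
      · rintro _ ⟨⟨w, z⟩, ⟨hw, hz⟩, rfl⟩
        refine (convex_convexHull ℝ K).sum_mem (fun i _ => hw.1 i) hw.2
          (fun i _ => subset_convexHull ℝ K (hz i (Set.mem_univ i)))
    rw [him]
    exact hT.image hg

variable {n : ℕ}

/-- The rank-one outer product `v vᴴ`. -/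
noncomputable def outerP (v : Fin n → ℂ) : Matrix (Fin n) (Fin n) ℂ :=
  vecMulVec v (star v)

lemma outerP_posSemidef (v : Fin n → ℂ) : (outerP v).PosSemidef := by
  have : outerP v = replicateCol Unit v * (replicateCol Unit v)ᴴ := by
    rw [outerP, vecMulVec_eq Unit, conjTranspose_replicateCol]
  rw [this]
  exact posSemidef_self_mul_conjTranspose _

lemma outerP_mulVec (v x : Fin n → ℂ) :
    (outerP v) *ᵥ x = (star v ⬝ᵥ x) • v := by
  ext k
  simp only [outerP, mulVec, vecMulVec_apply, dotProduct, Pi.star_apply, Pi.smul_apply,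
    smul_eq_mul, Finset.sum_mul]
  exact Finset.sum_congr rfl fun l _ => by ring

lemma trace_mul_outerP (A : Matrix (Fin n) (Fin n) ℂ) (v : Fin n → ℂ) :
    (A * outerP v).trace = star v ⬝ᵥ (A *ᵥ v) := by
  simp only [trace, diag_apply, mul_apply, outerP, vecMulVec_apply, dotProduct, mulVec,
    Pi.star_apply]
  apply Finset.sum_congr rfl
  intro k _
  rw [Finset.mul_sum]
  apply Finset.sum_congr rfl
  intro l _
  ring

lemma hermitian_quad_real {A : Matrix (Fin n) (Fin n) ℂ} (hA : A.IsHermitian)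
    (v : Fin n → ℂ) : star v ⬝ᵥ (A *ᵥ v) = ((star v ⬝ᵥ (A *ᵥ v)).re : ℂ) := by
  have key : (starRingEnd ℂ) (star v ⬝ᵥ (A *ᵥ v)) = star v ⬝ᵥ (A *ᵥ v) → star v ⬝ᵥ (A *ᵥ v) = ((star v ⬝ᵥ (A *ᵥ v)).re : ℂ) := by
    intro h
    first
      | exact Complex.conj_eq_iff_re.mp h
      | exact (Complex.conj_eq_iff_re.mp h).symm
  apply key
  have hAe : ∀ k l, (starRingEnd ℂ) (A l k) = A k l := by
    intro k l
    have := congrFun (congrFun hA k) l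
    simpa [conjTranspose_apply] using this
  simp only [dotProduct, mulVec, Pi.star_apply, map_sum, Finset.mul_sum, RCLike.star_def]
  rw [Finset.sum_comm]
  apply Finset.sum_congr rfl
  intro k _
  apply Finset.sum_congr rfl
  intro l _
  rw [_root_.map_mul, _root_.map_mul, Complex.conj_conj, hAe k l]
  ring

lemma trace_outerP (x : Fin n → ℂ) : (outerP x).trace = star x ⬝ᵥ x := by
  have := trace_mul_outerP 1 x
  simpa [one_mulVec] using this

lemma re_star_dot_self (x : Fin n → ℂ) :
    (star x ⬝ᵥ x).re = ∑ k, Complex.normSq (x k) := by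
  rw [dotProduct, Complex.re_sum]
  refine Finset.sum_congr rfl fun k _ => ?_
  rw [Pi.star_apply, RCLike.star_def, mul_comm, Complex.mul_conj]
  exact Complex.ofReal_re _

lemma re_star_dot_self_pos {x : Fin n → ℂ} (hx : x ≠ 0) :
    0 < (star x ⬝ᵥ x).re := by
  rw [re_star_dot_self]
  obtain ⟨k, hk⟩ := Function.ne_iff.mp hx
  exact Finset.sum_pos' (fun k _ => Complex.normSq_nonneg _)
    ⟨k, Finset.mem_univ k, Complex.normSq_pos.mpr hk⟩

lemma aux_sum_mulVec {ι : Type*} (s : Finset ι) (A : ι → Matrix (Fin n) (Fin n) ℂ)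
    (x : Fin n → ℂ) : (∑ i ∈ s, A i) *ᵥ x = ∑ i ∈ s, A i *ᵥ x := by
  ext k
  simp only [mulVec, dotProduct, Finset.sum_apply, Matrix.sum_apply, Finset.sum_mul]
  rw [Finset.sum_comm]

lemma aux_dotProduct_sum {ι : Type*} (s : Finset ι) (v : Fin n → ℂ)
    (w : ι → Fin n → ℂ) : v ⬝ᵥ (∑ i ∈ s, w i) = ∑ i ∈ s, v ⬝ᵥ w i := by
  simp only [dotProduct, Finset.sum_apply, Finset.mul_sum]
  rw [Finset.sum_comm]

lemma quad_smul_real (A : Matrix (Fin n) (Fin n) ℂ) (c : ℝ) (v : Fin n → ℂ) :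
    star (((c : ℝ) : ℂ) • v) ⬝ᵥ (A *ᵥ (((c : ℝ) : ℂ) • v)) =
      ((c ^ 2 : ℝ) : ℂ) * (star v ⬝ᵥ (A *ᵥ v)) := by
  rw [star_smul, mulVec_smul, smul_dotProduct, dotProduct_smul]
  simp only [smul_eq_mul, RCLike.star_def, Complex.conj_ofReal]
  push_cast
  ring

end Aux

/-- Hard direction of Lemma 4.3: if no real linear combination of the Hermitian
matrices `M_j` is positive definite on the nontrivial subspace `V`, then there
is a nonzero positive semi-definite matrix `N` with range contained in `V` and
`Tr(M_j N) = 0` for all `j`. -/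
theorem indefinite_implies_orthogonal_psd {n m : ℕ}
    (M : Fin m → Matrix (Fin n) (Fin n) ℂ) (hM : ∀ j, (M j).IsHermitian)
    (V : Submodule ℂ (Fin n → ℂ)) (hV : V ≠ ⊥)
    (hindef : ¬ ∃ a : Fin m → ℝ, PosDefOn (∑ j, a j • M j) V) :
    ∃ N : Matrix (Fin n) (Fin n) ℂ, N.PosSemidef ∧ N ≠ 0 ∧
      LinearMap.range N.mulVecLin ≤ V ∧ ∀ j, (M j * N).trace = 0 := by
  classical
  set φ : (Fin n → ℂ) → (Fin m → ℝ) := fun v j => (star v ⬝ᵥ (M j *ᵥ v)).re with hφ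
  set S : Set (Fin n → ℂ) := (V : Set (Fin n → ℂ)) ∩ Metric.sphere 0 1 with hS
  have hScompact : IsCompact S :=
    (isCompact_sphere 0 1).inter_left V.closed_of_finiteDimensional
  have hφcont : Continuous φ := by
    apply continuous_pi
    intro j
    exact Complex.continuous_re.comp
      (continuous_star.dotProduct (continuous_const.matrix_mulVec continuous_id))
  set K : Set (Fin m → ℝ) := φ '' S with hK
  have hKcompact : IsCompact K := hScompact.image hφcont
  by_cases h0 : (0 : Fin m → ℝ) ∈ convexHull ℝ K
  · -- extract a convex combination equal to 0
    obtain ⟨ι, hι, z, w, hzK, hai, hw0, hw1, hsum⟩ :=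
      eq_pos_convex_span_of_mem_convexHull h0
    have hchoice : ∀ i, ∃ v, v ∈ S ∧ φ v = z i := fun i => hzK (Set.mem_range_self i)
    choose v hvS hvφ using hchoice
    have hvV : ∀ i, v i ∈ V := fun i => (hvS i).1
    have hvnorm : ∀ i, ‖v i‖ = 1 := fun i => mem_sphere_zero_iff_norm.mp (hvS i).2
    have hvne : ∀ i, v i ≠ 0 := fun i => by
      intro h
      have := hvnorm i
      rw [h, norm_zero] at this
      norm_num at this
    set u : ι → (Fin n → ℂ) := fun i => ((Real.sqrt (w i) : ℝ) : ℂ) • v i with hu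
    have huV : ∀ i, u i ∈ V := fun i => V.smul_mem _ (hvV i)
    have hune : ∀ i, u i ≠ 0 := fun i =>
      smul_ne_zero (by
        simp only [ne_eq, Complex.ofReal_eq_zero]
        exact (Real.sqrt_pos.mpr (hw0 i)).ne') (hvne i)
    set N : Matrix (Fin n) (Fin n) ℂ := ∑ i, outerP (u i) with hN
    have hquad : ∀ (A : Matrix (Fin n) (Fin n) ℂ) i,
        star (u i) ⬝ᵥ (A *ᵥ u i) = ((w i : ℝ) : ℂ) * (star (v i) ⬝ᵥ (A *ᵥ v i)) := by
      intro A i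
      rw [hu]
      simp only
      rw [quad_smul_real, Real.sq_sqrt (hw0 i).le]
    refine ⟨N, ?_, ?_, ?_, ?_⟩
    · exact Finset.sum_induction _ _ (fun a b ha hb => ha.add hb)
        (Matrix.PosSemidef.zero) (fun i _ => outerP_posSemidef _)
    · -- nonzero: positive trace
      have hne : Nonempty ι := by
        rcases isEmpty_or_nonempty ι with h | h
        · rw [Finset.univ_eq_empty, Finset.sum_empty] at hw1
          norm_num at hw1
        · exact h
      obtain ⟨i₀⟩ := hne
      have htr : 0 < N.trace.re := by
        rw [hN, Matrix.trace_sum, Complex.re_sum]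
        simp only [trace_outerP]
        exact Finset.sum_pos' (fun i _ => (re_star_dot_self_pos (hune i)).le)
          ⟨i₀, Finset.mem_univ i₀, re_star_dot_self_pos (hune i₀)⟩
      intro h
      rw [h, Matrix.trace_zero] at htr
      simp at htr
    · rintro y ⟨x, rfl⟩
      rw [Matrix.mulVecLin_apply, hN, aux_sum_mulVec]
      refine V.sum_mem fun i _ => ?_
      rw [outerP_mulVec]
      exact V.smul_mem _ (huV i)
    · intro j
      rw [hN, Finset.mul_sum, Matrix.trace_sum]
      have hterm : ∀ i, (M j * outerP (u i)).trace = ((w i * z i j : ℝ) : ℂ) := by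
        intro i
        rw [trace_mul_outerP, hquad (M j) i, hermitian_quad_real (hM j) (v i)]
        have : (star (v i) ⬝ᵥ (M j *ᵥ v i)).re = z i j := by
          have := congrFun (hvφ i) j
          simpa [hφ] using this
        rw [this]
        push_cast
        ring
      rw [Finset.sum_congr rfl fun i _ => hterm i]
      rw [← Complex.ofReal_sum]
      norm_cast
      have := congrFun hsum j
      simpa [Finset.sum_apply] using this
  · -- separation: contradiction with hindef
    exfalso
    apply hindef
    have hclosed : IsClosed (convexHull ℝ K) :=
      (aux_isCompact_convexHull hKcompact).isClosed
    obtain ⟨f, t, ht0, htb⟩ :=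
      geometric_hahn_banach_point_closed (convex_convexHull ℝ K) hclosed h0
    have htpos : 0 < t := by simpa using ht0
    refine ⟨fun j => f (Pi.single j 1), ?_⟩
    intro v hvV hvne
    have hf : ∀ x : Fin m → ℝ, f x = ∑ j, x j * f (Pi.single j 1) := by
      intro x
      conv_lhs => rw [pi_eq_sum_univ x]
      rw [map_sum]
      refine Finset.sum_congr rfl fun j _ => ?_
      rw [_root_.map_smul, smul_eq_mul]
      congr 2
      ext l
      simp [Pi.single_apply, eq_comm]
    set c : ℝ := ‖v‖ with hc
    have hcpos : 0 < c := norm_pos_iff.mpr hvne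
    set v' : Fin n → ℂ := ((c⁻¹ : ℝ) : ℂ) • v with hv'
    have hv'S : v' ∈ S := by
      refine ⟨V.smul_mem _ hvV, ?_⟩
      rw [mem_sphere_zero_iff_norm, hv', norm_smul]
      simp only [Complex.norm_real, Real.norm_eq_abs, abs_of_pos (inv_pos.mpr hcpos)]
      exact inv_mul_cancel₀ hcpos.ne'
    have hmem : φ v' ∈ convexHull ℝ K := subset_convexHull ℝ K ⟨v', hv'S, rfl⟩
    have h1 : 0 < f (φ v') := htpos.trans (htb _ hmem)
    have hquad' : ∀ j, φ v' j = (c⁻¹) ^ 2 * (star v ⬝ᵥ (M j *ᵥ v)).re := by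
      intro j
      show (star v' ⬝ᵥ (M j *ᵥ v')).re = _
      rw [hv', quad_smul_real, Complex.re_ofReal_mul]
    have hexp : (star v ⬝ᵥ ((∑ j, (fun j => f (Pi.single j 1)) j • M j) *ᵥ v)).re =
        ∑ j, f (Pi.single j 1) * (star v ⬝ᵥ (M j *ᵥ v)).re := by
      rw [aux_sum_mulVec]
      have : ∀ j, ((fun j => f (Pi.single j 1)) j • M j) *ᵥ v =
          f (Pi.single j 1) • (M j *ᵥ v) := fun j => smul_mulVec _ _ _
      rw [Finset.sum_congr rfl fun j _ => this j, aux_dotProduct_sum, Complex.re_sum]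
      refine Finset.sum_congr rfl fun j _ => ?_
      rw [dotProduct_smul, Complex.smul_re, smul_eq_mul]
    rw [hexp]
    have h2 : f (φ v') = (c⁻¹) ^ 2 * ∑ j, f (Pi.single j 1) * (star v ⬝ᵥ (M j *ᵥ v)).re := by
      rw [hf (φ v'), Finset.mul_sum]
      refine Finset.sum_congr rfl fun j _ => ?_
      rw [hquad' j]
      ring
    have h3 : 0 < (c⁻¹) ^ 2 * ∑ j, f (Pi.single j 1) * (star v ⬝ᵥ (M j *ᵥ v)).re :=
      h2 ▸ h1
    have hk : 0 < (c⁻¹ : ℝ) ^ 2 := by positivity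
    nlinarith [h3, hk, sq_nonneg (c⁻¹)]
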